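/- Normal-form completeness of parallel unbiased reduction (Call-by-Name): for every β-normal λ-term N and every λ-term M, M →β* N if and only if M ⇒pd* N (where * denotes reflexive-transitive closure). -/

import Mathlib

/-- Untyped λ-terms in de Bruijn representation. -/
inductive Tm : Type
  | var : ℕ → Tm
  | lam : Tm → Tm
  | app : Tm → Tm → Tm
deriving DecidableEq

namespace Tm

/-- Lift (shift by one) the free variables of index `≥ d`. -/
def lift (d : ℕ) : Tm → Tm
  | var n => if n < d then var n else var (n + 1)
  | lam M => lam (lift (d + 1) M)
  | app M N => app (lift d M) (lift d N)

/-- Capture-avoiding substitution `M[N/k]` of `N` for the free variable `k` in `M`. -/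
def subst : Tm → ℕ → Tm → Tm
  | var n, k, N => if n = k then N else if k < n then var (n - 1) else var n
  | lam M, k, N => lam (subst M (k + 1) (lift 0 N))
  | app M₁ M₂, k, N => app (subst M₁ k N) (subst M₂ k N)

end Tm

/-- β-reduction: the closure of the root rule `(λx.M)N ↦β M[N/x]` under arbitrary contexts. -/
inductive Beta : Tm → Tm → Prop
  | beta (M N : Tm) : Beta (Tm.app (Tm.lam M) N) (M.subst 0 N)
  | lam {M M'} : Beta M M' → Beta (Tm.lam M) (Tm.lam M')
  | appL {M M' N} : Beta M M' → Beta (Tm.app M N) (Tm.app M' N)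
  | appR {M N N'} : Beta N N' → Beta (Tm.app M N) (Tm.app M N')

/-- Head reduction: the closure of `↦β` under head contexts `H ::= ⟨⟩ | λx.H | H M`. -/
inductive Head : Tm → Tm → Prop
  | beta (M N : Tm) : Head (Tm.app (Tm.lam M) N) (M.subst 0 N)
  | lam {M M'} : Head M M' → Head (Tm.lam M) (Tm.lam M')
  | appL {M M' N} : Head M M' → Head (Tm.app M N) (Tm.app M' N)

/-- The unbiased strategy `⊳`: perform head steps as long as possible; once the term has
no head redex, iterate in the subterms (in arbitrary order). -/
inductive Unb : Tm → Tm → Prop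
  | head {M M'} : Head M M' → Unb M M'
  | lam {P P'} : (∀ s, ¬ Head (Tm.lam P) s) → Unb P P' → Unb (Tm.lam P) (Tm.lam P')
  | appL {P P' Q} : (∀ s, ¬ Head (Tm.app P Q) s) → Unb P P' →
      Unb (Tm.app P Q) (Tm.app P' Q)
  | appR {P Q Q'} : (∀ s, ¬ Head (Tm.app P Q) s) → Unb Q Q' →
      Unb (Tm.app P Q) (Tm.app P Q')

/-- `M` is β-normal: it has no `→β`-successor. -/
def BetaNormal (M : Tm) : Prop := ∀ N, ¬ Beta M N

/-- Parallel unbiased reduction `⇒pd`: a head step if there is one; the identity on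
β-normal forms; otherwise (a β-redex but no head redex) reduce all subterms in
parallel. -/
inductive Pd : Tm → Tm → Prop
  | head {M M'} : Head M M' → Pd M M'
  | nf {M} : BetaNormal M → Pd M M
  | lam {P P'} : ¬ BetaNormal (Tm.lam P) → (∀ s, ¬ Head (Tm.lam P) s) →
      Pd P P' → Pd (Tm.lam P) (Tm.lam P')
  | app {P₁ P₁' P₂ P₂'} : ¬ BetaNormal (Tm.app P₁ P₂) →
      (∀ s, ¬ Head (Tm.app P₁ P₂) s) → Pd P₁ P₁' → Pd P₂ P₂' →
      Pd (Tm.app P₁ P₂) (Tm.app P₁' P₂')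

namespace Tm

theorem lift_lift (M : Tm) : ∀ i j, i ≤ j → lift i (lift j M) = lift (j+1) (lift i M) := by
  induction M with
  | var n =>
    intro i j h
    simp only [lift]
    split_ifs <;> simp only [lift] <;> split_ifs <;> first | rfl | omega
  | lam M ih =>
    intro i j h
    simp only [lift, ih (i+1) (j+1) (by omega)]
  | app M N ihM ihN =>
    intro i j h
    simp only [lift, ihM i j h, ihN i j h]

theorem subst_lift_cancel (M : Tm) : ∀ k N, (lift k M).subst k N = M := by
  induction M with
  | var n =>
    intro k N
    simp only [lift]
    split_ifs <;> simp only [subst] <;> split_ifs <;> first | rfl | omega | (congr 1; omega)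
  | lam M ih => intro k N; simp only [lift, subst, ih]
  | app M N ihM ihN => intro k N; simp only [lift, subst, ihM, ihN]

-- b: d ≤ k : lift d (M.subst k N) = (lift d M).subst (k+1) (lift d N)
theorem lift_subst (M : Tm) : ∀ d k N, d ≤ k →
    lift d (M.subst k N) = (lift d M).subst (k+1) (lift d N) := by
  induction M with
  | var n =>
    intro d k N h
    simp only [subst]
    split_ifs <;> simp only [lift] <;> split_ifs <;>
      simp only [subst] <;> split_ifs <;> first | rfl | omega | (congr 1; omega)
  | lam M ih =>
    intro d k N h
    simp only [lift, subst, ih (d+1) (k+1) (lift 0 N) (by omega)]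
    rw [lift_lift N 0 d (by omega)]
  | app M N ihM ihN =>
    intro d k N h
    simp only [lift, subst, ihM _ _ _ h, ihN _ _ _ h]

-- c: k ≤ d : lift d (M.subst k N) = (lift (d+1) M).subst k (lift d N)
theorem lift_subst_high (M : Tm) : ∀ d k N, k ≤ d →
    lift d (M.subst k N) = (lift (d+1) M).subst k (lift d N) := by
  induction M with
  | var n =>
    intro d k N h
    simp only [subst]
    split_ifs <;> simp only [lift] <;> split_ifs <;>
      simp only [subst] <;> split_ifs <;> first | rfl | omega | (congr 1; omega)
  | lam M ih =>
    intro d k N h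
    simp only [lift, subst, ih (d+1) (k+1) (lift 0 N) (by omega)]
    rw [lift_lift N 0 d (by omega)]
  | app M N ihM ihN =>
    intro d k N h
    simp only [lift, subst, ihM _ _ _ h, ihN _ _ _ h]

-- d: i ≤ j : (M.subst i N).subst j P = (M.subst (j+1) (lift i P)).subst i (N.subst j P)
theorem subst_subst (M : Tm) : ∀ i j N P, i ≤ j →
    (M.subst i N).subst j P = (M.subst (j+1) (lift i P)).subst i (N.subst j P) := by
  induction M with
  | var n =>
    intro i j N P h
    simp only [subst]
    split_ifs <;> simp only [subst, lift, subst_lift_cancel] <;> (try split_ifs) <;>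
      first | rfl | omega | (exfalso; omega) | (congr 1; omega) |
        (simp only [subst_lift_cancel]) | (simp only [subst]; (try split_ifs) <;>
          first | rfl | (exfalso; omega) | (congr 1; omega))
  | lam M ih =>
    intro i j N P h
    simp only [subst, ih (i+1) (j+1) (lift 0 N) (lift 0 P) (by omega)]
    rw [lift_lift P 0 i (by omega), lift_subst N 0 j P (by omega)]
  | app A B ihA ihB =>
    intro i j N P h
    simp only [subst, ihA _ _ _ _ h, ihB _ _ _ _ h]


end Tm

/- ### Basic facts -/

theorem head_beta {M N : Tm} (h : Head M N) : Beta M N := by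
  induction h with
  | beta M N => exact Beta.beta M N
  | lam _ ih => exact Beta.lam ih
  | appL _ ih => exact Beta.appL ih

theorem pd_betaStar {M N : Tm} (h : Pd M N) : Relation.ReflTransGen Beta M N := by
  induction h with
  | head h => exact Relation.ReflTransGen.single (head_beta h)
  | nf _ => exact Relation.ReflTransGen.refl
  | lam _ _ _ ih =>
      exact Relation.ReflTransGen.lift Tm.lam (fun _ _ h => Beta.lam h) _ _ ih
  | @app P₁ P₁' P₂ P₂' _ _ _ _ ih₁ ih₂ =>
      refine Relation.ReflTransGen.trans
        (Relation.ReflTransGen.lift (fun x => Tm.app x P₂) (fun _ _ h => Beta.appL h) _ _ ih₁)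
        (Relation.ReflTransGen.lift (fun x => Tm.app P₁' x) (fun _ _ h => Beta.appR h) _ _ ih₂)

/- ### Weak head reduction and standard reduction (Kashima) -/

inductive Hap1 : Tm → Tm → Prop
  | beta (M N) : Hap1 (Tm.app (Tm.lam M) N) (M.subst 0 N)
  | appL {M M' N} : Hap1 M M' → Hap1 (Tm.app M N) (Tm.app M' N)

abbrev Hap := Relation.ReflTransGen Hap1

inductive St : Tm → Tm → Prop
  | var {M n} : Hap M (Tm.var n) → St M (Tm.var n)
  | lam {M P P'} : Hap M (Tm.lam P) → St P P' → St M (Tm.lam P')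
  | app {M P P' Q Q'} : Hap M (Tm.app P Q) → St P P' → St Q Q' →
      St M (Tm.app P' Q')

theorem hap1_head {M N : Tm} (h : Hap1 M N) : Head M N := by
  induction h with
  | beta M N => exact Head.beta M N
  | appL _ ih => exact Head.appL ih

theorem hap_appL {M M' N : Tm} (h : Hap M M') : Hap (Tm.app M N) (Tm.app M' N) :=
  Relation.ReflTransGen.lift (fun x => Tm.app x N) (fun _ _ h => Hap1.appL h) _ _ h

theorem st_refl (M : Tm) : St M M := by
  induction M with
  | var n => exact St.var Relation.ReflTransGen.refl
  | lam M ih => exact St.lam Relation.ReflTransGen.refl ih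
  | app M N ihM ihN => exact St.app Relation.ReflTransGen.refl ihM ihN

theorem hap_st {M N L : Tm} (h : Hap M N) (h2 : St N L) : St M L := by
  cases h2 with
  | var h1 => exact St.var (h.trans h1)
  | lam h1 hs => exact St.lam (h.trans h1) hs
  | app h1 hs1 hs2 => exact St.app (h.trans h1) hs1 hs2

theorem hap1_lift {M N : Tm} (h : Hap1 M N) : ∀ d, Hap1 (Tm.lift d M) (Tm.lift d N) := by
  induction h with
  | beta M N =>
      intro d
      have : Tm.lift d (M.subst 0 N) = (Tm.lift (d+1) M).subst 0 (Tm.lift d N) :=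
        Tm.lift_subst_high M d 0 N (by omega)
      rw [this]
      exact Hap1.beta _ _
  | appL _ ih => intro d; exact Hap1.appL (ih d)

theorem hap_lift {M N : Tm} (h : Hap M N) (d : ℕ) : Hap (Tm.lift d M) (Tm.lift d N) :=
  Relation.ReflTransGen.lift (Tm.lift d) (fun _ _ h => hap1_lift h d) _ _ h

theorem st_lift {M N : Tm} (h : St M N) : ∀ d, St (Tm.lift d M) (Tm.lift d N) := by
  induction h with
  | var h1 => intro d; exact hap_st (hap_lift h1 d) (st_refl _)
  | lam h1 _ ih =>
      intro d
      exact St.lam (by simpa [Tm.lift] using hap_lift h1 d) (ih (d+1))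
  | app h1 _ _ ih1 ih2 =>
      intro d
      exact St.app (by simpa [Tm.lift] using hap_lift h1 d) (ih1 d) (ih2 d)

theorem hap1_subst {M N : Tm} (h : Hap1 M N) : ∀ k L, Hap1 (M.subst k L) (N.subst k L) := by
  induction h with
  | beta M N =>
      intro k L
      have : (M.subst 0 N).subst k L
          = (M.subst (k+1) (Tm.lift 0 L)).subst 0 (N.subst k L) :=
        Tm.subst_subst M 0 k N L (by omega)
      rw [this]
      exact Hap1.beta _ _
  | appL _ ih => intro k L; exact Hap1.appL (ih k L)

theorem hap_subst {M N : Tm} (h : Hap M N) (k : ℕ) (L : Tm) :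
    Hap (M.subst k L) (N.subst k L) :=
  Relation.ReflTransGen.lift (fun x => Tm.subst x k L) (fun _ _ h => hap1_subst h k L) _ _ h

theorem st_subst {M M' : Tm} (h : St M M') :
    ∀ k {N N' : Tm}, St N N' → St (M.subst k N) (M'.subst k N') := by
  induction h with
  | @var M n h1 =>
      intro k N N' hN
      have hh := hap_subst h1 k N
      by_cases hn : n = k
      · subst hn
        have e : ∀ L : Tm, (Tm.var n).subst n L = L := by intro L; simp [Tm.subst]
        rw [e] at hh
        rw [e]
        exact hap_st hh hN
      · have e : ∀ L : Tm, (Tm.var n).subst k L = (Tm.var n).subst k N := by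
          intro L; simp only [Tm.subst, if_neg hn]
        rw [e N']
        exact hap_st hh (st_refl _)
  | @lam M P P' h1 _ ih =>
      intro k N N' hN
      have hh := hap_subst h1 k N
      simp only [Tm.subst] at hh
      exact St.lam hh (ih (k+1) (st_lift hN 0))
  | @app M P P' Q Q' h1 _ _ ih1 ih2 =>
      intro k N N' hN
      have hh := hap_subst h1 k N
      simp only [Tm.subst] at hh
      exact St.app hh (ih1 k hN) (ih2 k hN)

theorem st_beta {M N N' : Tm} (h : St M N) (hb : Beta N N') : St M N' := by
  induction hb generalizing M with
  | beta P Q =>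
      rcases h with _ | _ | ⟨h1, hs1, hs2⟩
      rcases hs1 with _ | ⟨h2, hs⟩
      refine hap_st h1 (hap_st (hap_appL h2) ?_)
      refine hap_st (Relation.ReflTransGen.single (Hap1.beta _ _)) ?_
      exact st_subst hs 0 hs2
  | lam _ ih =>
      rcases h with _ | ⟨h1, hs⟩
      exact St.lam h1 (ih hs)
  | appL _ ih =>
      rcases h with _ | _ | ⟨h1, hs1, hs2⟩
      exact St.app h1 (ih hs1) hs2
  | appR _ ih =>
      rcases h with _ | _ | ⟨h1, hs1, hs2⟩
      exact St.app h1 hs1 (ih hs2)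

theorem betaStar_st {M N : Tm} (h : Relation.ReflTransGen Beta M N) : St M N := by
  induction h with
  | refl => exact st_refl M
  | tail _ hb ih => exact st_beta ih hb


/- ### Normal form facts -/

theorem bn_exists {M : Tm} (h : ¬ BetaNormal M) : ∃ N, Beta M N := by
  unfold BetaNormal at h; push_neg at h; simpa using h

theorem bn_lam {P : Tm} (h : BetaNormal P) : BetaNormal (Tm.lam P) := by
  intro N hB
  cases hB with
  | lam hb => exact h _ hb

theorem bn_lam_inv {P : Tm} (h : BetaNormal (Tm.lam P)) : BetaNormal P :=
  fun N hb => h _ (Beta.lam hb)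

theorem bn_app_inv {P Q : Tm} (h : BetaNormal (Tm.app P Q)) :
    BetaNormal P ∧ BetaNormal Q :=
  ⟨fun N hb => h _ (Beta.appL hb), fun N hb => h _ (Beta.appR hb)⟩

theorem bn_app_not_lam {P Q : Tm} (h : BetaNormal (Tm.app P Q)) :
    ∀ R, P ≠ Tm.lam R := by
  rintro R rfl
  exact h _ (Beta.beta R Q)

theorem normal_no_head {M : Tm} (h : BetaNormal M) : ∀ s, ¬ Head M s :=
  fun s hs => h s (head_beta hs)

theorem pd_classify {M N : Tm} (h : Pd M N) :
    Head M N ∨ (BetaNormal M ∧ N = M) ∨ (¬ BetaNormal M ∧ ∀ s, ¬ Head M s) := by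
  cases h with
  | head h => exact Or.inl h
  | nf h => exact Or.inr (Or.inl ⟨h, rfl⟩)
  | lam h1 h2 _ => exact Or.inr (Or.inr ⟨h1, h2⟩)
  | app h1 h2 _ _ => exact Or.inr (Or.inr ⟨h1, h2⟩)

theorem pd_normal_eq {M N : Tm} (hn : BetaNormal M) (h : Pd M N) : N = M := by
  rcases pd_classify h with h | ⟨_, rfl⟩ | ⟨h1, _⟩
  · exact absurd (head_beta h) (hn N)
  · rfl
  · exact absurd hn h1

theorem pd_lam_cong {P P' : Tm} (h : Pd P P') : Pd (Tm.lam P) (Tm.lam P') := by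
  rcases pd_classify h with hh | ⟨hn, rfl⟩ | ⟨h1, h2⟩
  · exact Pd.head (Head.lam hh)
  · exact Pd.nf (bn_lam hn)
  · refine Pd.lam ?_ ?_ h
    · obtain ⟨y, hy⟩ := bn_exists h1
      exact fun hc => hc _ (Beta.lam hy)
    · intro s hs
      cases hs with
      | lam hs => exact h2 _ hs

theorem pd_lam_shape {P R : Tm} (h : Pd (Tm.lam P) R) : ∃ Q, R = Tm.lam Q := by
  cases h with
  | head h => cases h with | lam h => exact ⟨_, rfl⟩
  | nf _ => exact ⟨P, rfl⟩
  | lam _ _ _ => exact ⟨_, rfl⟩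

theorem pdStar_lam_shape {M N : Tm} (h : Relation.ReflTransGen Pd M N) :
    ∀ P, M = Tm.lam P → ∃ Q, N = Tm.lam Q := by
  induction h using Relation.ReflTransGen.head_induction_on with
  | refl => exact fun P hP => ⟨P, hP⟩
  | head hstep _ ih =>
      rintro P rfl
      obtain ⟨Q, rfl⟩ := pd_lam_shape hstep
      exact ih Q rfl

/-- no head redex in `app P Q` when `P` is head-normal and not a lambda -/
theorem app_no_head {P Q : Tm} (hP : ∀ s, ¬ Head P s) (hl : ∀ R, P ≠ Tm.lam R) :
    ∀ s, ¬ Head (Tm.app P Q) s := by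
  intro s hs
  cases hs with
  | beta M N => exact hl M rfl
  | appL h => exact hP _ h

/-- zip two Pd*-chains into one for the application, head position non-lam -/
theorem pd_app_star {N₁ N₂ : Tm} (hN₁ : BetaNormal N₁) (hN₂ : BetaNormal N₂)
    (hnl : ∀ R, N₁ ≠ Tm.lam R) :
    ∀ {P₁ : Tm}, Relation.ReflTransGen Pd P₁ N₁ →
    ∀ {P₂ : Tm}, Relation.ReflTransGen Pd P₂ N₂ →
      Relation.ReflTransGen Pd (Tm.app P₁ P₂) (Tm.app N₁ N₂) := by
  intro P₁ h₁
  induction h₁ using Relation.ReflTransGen.head_induction_on with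
  | refl =>
      intro P₂ h₂
      induction h₂ using Relation.ReflTransGen.head_induction_on with
      | refl => exact Relation.ReflTransGen.refl
      | @head P₂ X hstep htail ih =>
          by_cases hn : BetaNormal P₂
          · have e := pd_normal_eq hn hstep
            subst e
            exact ih
          · refine Relation.ReflTransGen.head ?_ ih
            refine Pd.app ?_ (app_no_head (normal_no_head hN₁) hnl) (Pd.nf hN₁) hstep
            obtain ⟨y, hy⟩ := bn_exists hn
            exact fun hc => hc _ (Beta.appR hy)
  | @head P₁ T hstep htail ih =>
      intro P₂ h₂
      rcases pd_classify hstep with hh | ⟨hn, he⟩ | ⟨h1, h2⟩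
      · exact Relation.ReflTransGen.head (Pd.head (Head.appL hh)) (ih h₂)
      · rw [← he]; exact ih h₂
      · have hP₁l : ∀ R, P₁ ≠ Tm.lam R := by
          rintro R rfl
          obtain ⟨Q, hQ⟩ := pdStar_lam_shape (Relation.ReflTransGen.head hstep htail) R rfl
          exact hnl Q hQ
        have hnh := app_no_head (Q := P₂) h2 hP₁l
        have hnn : ¬ BetaNormal (Tm.app P₁ P₂) := by
          obtain ⟨y, hy⟩ := bn_exists h1
          exact fun hc => hc _ (Beta.appL hy)
        rcases h₂.cases_head with rfl | ⟨X, hX, hX2⟩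
        · exact Relation.ReflTransGen.head (Pd.app hnn hnh hstep (Pd.nf hN₂)) (ih Relation.ReflTransGen.refl)
        · exact Relation.ReflTransGen.head (Pd.app hnn hnh hstep hX) (ih hX2)

/- ### Extraction: standard reduction to a normal form yields a Pd*-path -/

theorem st_pd {M N : Tm} (h : St M N) (hN : BetaNormal N) :
    Relation.ReflTransGen Pd M N := by
  induction h with
  | var h1 => exact Relation.ReflTransGen.mono (fun _ _ hs => Pd.head (hap1_head hs)) _ _ h1
  | @lam M P P' h1 hs ih =>
      have hP' : BetaNormal P' := bn_lam_inv hN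
      refine Relation.ReflTransGen.trans
        (Relation.ReflTransGen.mono (fun _ _ hs => Pd.head (hap1_head hs)) _ _ h1) ?_
      exact Relation.ReflTransGen.lift Tm.lam (fun _ _ h => pd_lam_cong h) _ _ (ih hP')
  | @app M P P' Q Q' h1 hs1 hs2 ih1 ih2 =>
      obtain ⟨hP', hQ'⟩ := bn_app_inv hN
      refine Relation.ReflTransGen.trans
        (Relation.ReflTransGen.mono (fun _ _ hs => Pd.head (hap1_head hs)) _ _ h1) ?_
      exact pd_app_star hP' hQ' (bn_app_not_lam hN) (ih1 hP') (ih2 hQ')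



/-- **Normal-form completeness of parallel unbiased reduction (Call-by-Name)**:
for `N` β-normal, `M →β* N` iff `M ⇒pd* N`. -/
theorem cbn_parallel_nf_complete (M N : Tm) (hN : BetaNormal N) :
    Relation.ReflTransGen Beta M N ↔ Relation.ReflTransGen Pd M N := by
  constructor
  · intro h
    exact st_pd (betaStar_st h) hN
  · intro h
    clear hN
    induction h with
    | refl => exact Relation.ReflTransGen.refl
    | tail _ hstep ih => exact ih.trans (pd_betaStar hstep)
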